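/- arXiv:2106.04469 — 8 statements merged into one kernel-verified Lean document; each statement's English description precedes it below -/
import Mathlib

section
/- Descent lemma for the x-iterates of ADOM+: suppose τ₂ = √(μ/L), τ₁ = (1/τ₂ + 1/2)^{-1}, η = 1/(Lτ₂), α = μ/2, and vectors x^k, x_f^k, x_g^k, x^{k+1}, x_f^{k+1}, y^{k+1} ∈ E satisfy x_g^k = τ₁ x^k + (1 − τ₁) x_f^k, x^{k+1} = x^k + ηα(x_g^k − x^{k+1}) − η(∇F(x_g^k) − ν x_g^k − y^{k+1}), and x_f^{k+1} = x_g^k + τ₂(x^{k+1} − x^k). Let Ψ_x^k = (1/η + α)‖x^k − x*‖² + (2/τ₂)(D_F(x_f^k, x*) − (ν/2)‖x_f^k − x*‖²) and define Ψ_x^{k+1} analogously with x^{k+1}, x_f^{k+1}. Then Ψ_x^{k+1} ≤ (1 − √μ/(√μ + 2√L)) Ψ_x^k + 2⟨y^{k+1} − y*, x^{k+1} − x*⟩ − (D_F(x_g^k, x*) − (ν/2)‖x_g^k − x*‖²). -/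
open scoped InnerProductSpace BigOperators

noncomputable section

/-- The product space `E = (ℝ^d)^n` with inner product `⟨x, y⟩ = ∑ᵢ ⟨xᵢ, yᵢ⟩`. -/
abbrev E (n d : ℕ) : Type := PiLp 2 (fun _ : Fin n => EuclideanSpace ℝ (Fin d))

/-- The orthogonal projection `P` onto `L_c^⊥ = {z : ∑ᵢ zᵢ = 0}`:
`(Px)ᵢ = xᵢ − (1/n) ∑ⱼ xⱼ`. -/
def projP {n d : ℕ} (x : E n d) : E n d := WithLp.toLp 2 (fun i => x i - (n : ℝ)⁻¹ • ∑ j, x j)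

/-- `W : E → E` is a gossip map with parameter `χ`: it is given by an `n × n` matrix acting
blockwise (i.e. `W = W̃ ⊗ I_d`), it vanishes on the consensus space `L_c`, its range lies in
`L_c^⊥`, and `‖Wv − v‖² ≤ (1 − χ⁻¹)‖v‖²` for all `v ∈ L_c^⊥`. -/
def IsGossip {n d : ℕ} (χ : ℝ) (W : E n d → E n d) : Prop :=
  (∃ Wt : Matrix (Fin n) (Fin n) ℝ, ∀ (v : E n d) (i : Fin n), W v i = ∑ j, Wt i j • v j) ∧
  (∀ v : E n d, (∀ i j : Fin n, v i = v j) → W v = 0) ∧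
  (∀ v : E n d, ∑ i, W v i = 0) ∧
  (∀ v : E n d, ∑ i, v i = 0 → ‖W v - v‖ ^ 2 ≤ (1 - χ⁻¹) * ‖v‖ ^ 2)

/-- Bregman divergence `D_F(x, y) = F(x) − F(y) − ⟨∇F(y), x − y⟩` (here `G = ∇F`). -/
def DF {n d : ℕ} (F : E n d → ℝ) (G : E n d → E n d) (x y : E n d) : ℝ :=
  F x - F y - ⟪G y, x - y⟫_ℝ

/-- Primal Lyapunov function
`Ψ_x = (1/η + α)‖x − x*‖² + (2/τ₂)(D_F(x_f, x*) − (ν/2)‖x_f − x*‖²)`. -/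
def PsiX {n d : ℕ} (F : E n d → ℝ) (G : E n d → E n d) (η α τ₂ ν : ℝ)
    (xs xk xfk : E n d) : ℝ :=
  (1 / η + α) * ‖xk - xs‖ ^ 2 + (2 / τ₂) * (DF F G xfk xs - (ν / 2) * ‖xfk - xs‖ ^ 2)

/-- Dual Lyapunov function `Ψ_yz` (with `ẑ = z − P m`):
`(1/θ + β/2)‖y − y*‖² + (β/(2σ₂))‖y_f − y*‖² + (1/γ)‖ẑ − z*‖² + (4/(3γ))‖m‖_P²
  + (1/(νσ₂))‖y_f + z_f − (y* + z*)‖²`. -/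
def PsiYZ {n d : ℕ} (θ β σ₂ γ ν : ℝ) (ys zs yk yfk zk zfk mk : E n d) : ℝ :=
  (1 / θ + β / 2) * ‖yk - ys‖ ^ 2 + (β / (2 * σ₂)) * ‖yfk - ys‖ ^ 2
    + (1 / γ) * ‖zk - projP mk - zs‖ ^ 2 + (4 / (3 * γ)) * ‖projP mk‖ ^ 2
    + (1 / (ν * σ₂)) * ‖yfk + zfk - (ys + zs)‖ ^ 2

section auxlemmas
variable {V : Type*} [NormedAddCommGroup V] [InnerProductSpace ℝ V]

private lemma quad_id (η α : ℝ) (hη : η ≠ 0) (a b c g : V)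
    (h : b - a = (η * α) • (c - b) - η • g) :
    (1/η + α) * ‖b‖^2 =
      (1/η)*‖a‖^2 - (1/η)*‖b-a‖^2 + α*‖c‖^2 - α*‖c-b‖^2 - 2*⟪g, b⟫_ℝ := by
  have h2 : η * ⟪g, b⟫_ℝ = (η*α) * ⟪c - b, b⟫_ℝ - ⟪b - a, b⟫_ℝ := by
    have h1 : η • g = (η * α) • (c - b) - (b - a) := by rw [h]; abel
    have := congrArg (fun v => ⟪v, b⟫_ℝ) h1
    simpa only [inner_sub_left, real_inner_smul_left] using this
  have hba : ‖b - a‖^2 = ‖b‖^2 - 2*⟪a,b⟫_ℝ + ‖a‖^2 := by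
    rw [norm_sub_sq_real, real_inner_comm]
  have hcb : ‖c - b‖^2 = ‖c‖^2 - 2*⟪c,b⟫_ℝ + ‖b‖^2 := norm_sub_sq_real c b
  rw [inner_sub_left, inner_sub_left, real_inner_self_eq_norm_sq] at h2
  rw [hba, hcb]
  field_simp at h2 ⊢
  nlinarith [h2]

private lemma key_id (Gs Gg : V) (ν : ℝ) (xs xg w : V) :
    ⟪(Gg - Gs) - ν • (xg - xs), w - xg⟫_ℝ
      = ⟪Gg, w - xg⟫_ℝ - ⟪Gs, w - xs⟫_ℝ + ⟪Gs, xg - xs⟫_ℝ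
        - ν/2 * ‖w - xs‖^2 + ν/2 * ‖xg - xs‖^2 + ν/2 * ‖w - xg‖^2 := by
  have hn : ‖w - xs‖^2 = ‖xg - xs‖^2 + 2*⟪xg - xs, w - xg⟫_ℝ + ‖w - xg‖^2 := by
    have h : w - xs = (xg - xs) + (w - xg) := by abel
    rw [h, norm_add_sq_real]
  rw [hn]
  simp only [inner_sub_left, inner_sub_right, real_inner_smul_left]
  ring

private lemma ub_lem (F : V → ℝ) (Gs Gg : V) (μ ν : ℝ) (xs xg w : V)
    (hstrong : F xg + ⟪Gg, w - xg⟫_ℝ + (μ/2) * ‖w - xg‖^2 ≤ F w) :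
    ⟪(Gg - Gs) - ν • (xg - xs), w - xg⟫_ℝ ≤
      ((F w - F xs - ⟪Gs, w - xs⟫_ℝ) - ν/2 * ‖w - xs‖^2)
        - ((F xg - F xs - ⟪Gs, xg - xs⟫_ℝ) - ν/2 * ‖xg - xs‖^2)
        - ((μ - ν)/2) * ‖w - xg‖^2 := by
  have hk := key_id Gs Gg ν xs xg w
  linarith

private lemma lb_lem (F : V → ℝ) (Gs Gg : V) (L ν : ℝ) (hν : 0 ≤ ν) (xs xg w : V)
    (hsmooth : F w ≤ F xg + ⟪Gg, w - xg⟫_ℝ + (L/2) * ‖w - xg‖^2) :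
    ((F w - F xs - ⟪Gs, w - xs⟫_ℝ) - ν/2 * ‖w - xs‖^2)
      - ((F xg - F xs - ⟪Gs, xg - xs⟫_ℝ) - ν/2 * ‖xg - xs‖^2)
      - (L/2) * ‖w - xg‖^2
    ≤ ⟪(Gg - Gs) - ν • (xg - xs), w - xg⟫_ℝ := by
  have hk := key_id Gs Gg ν xs xg w
  have h0 : 0 ≤ ν/2 * ‖w - xg‖^2 := by positivity
  linarith

end auxlemmas

set_option maxHeartbeats 1000000

/-- **Descent lemma for the x-iterates of ADOM+.**
With `τ₂ = √(μ/L)`, `τ₁ = (1/τ₂ + 1/2)⁻¹`, `η = 1/(Lτ₂)`, `α = μ/2`, under the `x`-update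
relations of ADOM+:
`Ψ_x^{k+1} ≤ (1 − √μ/(√μ + 2√L)) Ψ_x^k + 2⟨y^{k+1} − y*, x^{k+1} − x*⟩
  − (D_F(x_g^k, x*) − (ν/2)‖x_g^k − x*‖²)`. -/
theorem adom_plus_x_descent
    {n d : ℕ} (hn : 1 ≤ n) (hd : 1 ≤ d)
    (μ L : ℝ) (hμ : 0 < μ) (hμL : μ ≤ L)
    (ν τ₂ τ₁ η α : ℝ)
    (hν : ν = μ / 2) (hτ₂ : τ₂ = Real.sqrt (μ / L)) (hτ₁ : τ₁ = (1 / τ₂ + 1 / 2)⁻¹)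
    (hη : η = 1 / (L * τ₂)) (hα : α = μ / 2)
    (F : E n d → ℝ) (G : E n d → E n d)
    (hgrad : ∀ x, HasGradientAt F (G x) x)
    (hsmooth : ∀ x y : E n d,
      F x ≤ F y + ⟪G y, x - y⟫_ℝ + (L / 2) * ‖x - y‖ ^ 2)
    (hstrong : ∀ x y : E n d,
      F y + ⟪G y, x - y⟫_ℝ + (μ / 2) * ‖x - y‖ ^ 2 ≤ F x)
    (xs ys : E n d) (hopt1 : G xs - ν • xs - ys = 0)
    (xk xfk xgk xk1 xfk1 yk1 : E n d)
    (hxg : xgk = τ₁ • xk + (1 - τ₁) • xfk)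
    (hxup : xk1 = xk + (η * α) • (xgk - xk1) - η • (G xgk - ν • xgk - yk1))
    (hxf : xfk1 = xgk + τ₂ • (xk1 - xk)) :
    PsiX F G η α τ₂ ν xs xk1 xfk1 ≤
      (1 - Real.sqrt μ / (Real.sqrt μ + 2 * Real.sqrt L)) * PsiX F G η α τ₂ ν xs xk xfk
        + 2 * ⟪yk1 - ys, xk1 - xs⟫_ℝ
        - (DF F G xgk xs - (ν / 2) * ‖xgk - xs‖ ^ 2) := by
  subst hν hα
  have hL : 0 < L := lt_of_lt_of_le hμ hμL
  have hsμ0 : 0 < Real.sqrt μ := Real.sqrt_pos.2 hμ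
  have hsL0 : 0 < Real.sqrt L := Real.sqrt_pos.2 hL
  have hsμ2 : Real.sqrt μ ^ 2 = μ := Real.sq_sqrt hμ.le
  have hsL2 : Real.sqrt L ^ 2 = L := Real.sq_sqrt hL.le
  have hsμL : Real.sqrt μ ≤ Real.sqrt L := Real.sqrt_le_sqrt hμL
  set sμ := Real.sqrt μ with hsμdef
  set sL := Real.sqrt L with hsLdef
  have hτ₂' : τ₂ = sμ / sL := by rw [hτ₂, Real.sqrt_div hμ.le]
  have hτ₂0 : 0 < τ₂ := by rw [hτ₂']; positivity
  have hτ₂1 : τ₂ ≤ 1 := by rw [hτ₂', div_le_one hsL0]; exact hsμL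
  have hη0 : 0 < η := by rw [hη]; positivity
  have hinv : 1/η = L * τ₂ := by rw [hη]; field_simp
  have hinv2 : 1/η = sL * sμ := by
    rw [hinv, hτ₂', ← hsL2]; field_simp
  have hfrac : (0:ℝ) < 1/τ₂ + 1/2 := by
    have h := one_div_pos.mpr hτ₂0; linarith only [h]
  have hτ₁0 : 0 < τ₁ := by rw [hτ₁]; exact inv_pos.2 hfrac
  have hτ₁ne : τ₁ ≠ 0 := ne_of_gt hτ₁0
  have hys : ys = G xs - (μ/2) • xs := (sub_eq_zero.mp hopt1).symm
  -- Step 1 : quadratic identity from the update rule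
  have hvec0 : (xk1 - xs) - (xk - xs)
      = (η * (μ/2)) • ((xgk - xs) - (xk1 - xs)) - η • (G xgk - (μ/2) • xgk - yk1) := by
    have h1 : xk1 - xk = (η * (μ/2)) • (xgk - xk1) - η • (G xgk - (μ/2) • xgk - yk1) := by
      nth_rewrite 1 [hxup]; abel
    rw [show (xk1 - xs) - (xk - xs) = xk1 - xk from by abel,
        show (xgk - xs) - (xk1 - xs) = xgk - xk1 from by abel]
    exact h1
  have H1 := quad_id η (μ/2) (ne_of_gt hη0) (xk - xs) (xk1 - xs) (xgk - xs)
      (G xgk - (μ/2) • xgk - yk1) hvec0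
  rw [show (xk1 - xs) - (xk - xs) = xk1 - xk from by abel,
      show (xgk - xs) - (xk1 - xs) = xgk - xk1 from by abel] at H1
  -- Step 2 : split the gradient term using the optimality condition
  have hgh : G xgk - (μ/2) • xgk - yk1
      = (G xgk - G xs - (μ/2) • (xgk - xs)) - (yk1 - ys) := by
    rw [hys, smul_sub]; abel
  have H2 : ⟪G xgk - (μ/2) • xgk - yk1, xk1 - xs⟫_ℝ
      = ⟪G xgk - G xs - (μ/2) • (xgk - xs), xk1 - xs⟫_ℝ - ⟪yk1 - ys, xk1 - xs⟫_ℝ := by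
    rw [hgh, inner_sub_left]
  have H3 : ⟪G xgk - G xs - (μ/2) • (xgk - xs), xk1 - xs⟫_ℝ
      = ⟪G xgk - G xs - (μ/2) • (xgk - xs), xk1 - xk⟫_ℝ
        - ⟪G xgk - G xs - (μ/2) • (xgk - xs), xgk - xk⟫_ℝ
        + ⟪G xgk - G xs - (μ/2) • (xgk - xs), xgk - xs⟫_ℝ := by
    rw [show xk1 - xs = ((xk1 - xk) - (xgk - xk)) + (xgk - xs) from by abel,
        inner_add_right, inner_sub_right]
  -- Step 3 : strong-convexity bound at x*
  have K2 := ub_lem F (G xs) (G xgk) μ (μ/2) xs xgk xs (hstrong xs xgk)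
  rw [show xs - xgk = -(xgk - xs) from by abel] at K2
  simp only [sub_self, inner_zero_right, norm_zero, inner_neg_right, norm_neg] at K2
  -- K2 : -⟪h, xgk - xs⟫ ≤ ...
  -- Step 4 : bound on ⟪h, xgk - xk⟫
  have hvec1 : τ₁ • (xgk - xk) = (1 - τ₁) • (xfk - xgk) := by
    rw [hxg]; module
  have hQ : τ₁ * ⟪G xgk - G xs - (μ/2) • (xgk - xs), xgk - xk⟫_ℝ
      = (1 - τ₁) * ⟪G xgk - G xs - (μ/2) • (xgk - xs), xfk - xgk⟫_ℝ := by
    rw [← real_inner_smul_right, ← real_inner_smul_right, hvec1]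
  have hτ₁eq : 1 - τ₁ = τ₁ * (1/τ₂ - 1/2) := by
    rw [hτ₁]; rw [inv_eq_one_div]; field_simp; ring
  have hP2 : ⟪G xgk - G xs - (μ/2) • (xgk - xs), xgk - xk⟫_ℝ
      = (1/τ₂ - 1/2) * ⟪G xgk - G xs - (μ/2) • (xgk - xs), xfk - xgk⟫_ℝ := by
    apply mul_left_cancel₀ hτ₁ne
    rw [hQ, hτ₁eq]; ring
  have hUBf := ub_lem F (G xs) (G xgk) μ (μ/2) xs xgk xfk (hstrong xfk xgk)
  have hcτ : (0:ℝ) ≤ 1/τ₂ - 1/2 := by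
    have : (1:ℝ) ≤ 1/τ₂ := by
      rw [le_one_div (by norm_num) hτ₂0]; simpa using hτ₂1
    linarith only [this]
  have hslack1 : 0 ≤ ((μ - μ/2)/2) * ‖xfk - xgk‖^2 :=
    mul_nonneg (by linarith only [hμ]) (sq_nonneg _)
  have K3 : 2 * ⟪G xgk - G xs - (μ/2) • (xgk - xs), xgk - xk⟫_ℝ
      ≤ (2/τ₂ - 1) * (((F xfk - F xs - ⟪G xs, xfk - xs⟫_ℝ) - μ/2/2 * ‖xfk - xs‖^2)
          - ((F xgk - F xs - ⟪G xs, xgk - xs⟫_ℝ) - μ/2/2 * ‖xgk - xs‖^2)) := by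
    rw [hP2]
    have h1 : ⟪G xgk - G xs - (μ/2) • (xgk - xs), xfk - xgk⟫_ℝ
        ≤ ((F xfk - F xs - ⟪G xs, xfk - xs⟫_ℝ) - μ/2/2 * ‖xfk - xs‖^2)
          - ((F xgk - F xs - ⟪G xs, xgk - xs⟫_ℝ) - μ/2/2 * ‖xgk - xs‖^2) := by
      linarith only [hUBf, hslack1]
    have h2 := mul_le_mul_of_nonneg_left h1 hcτ
    ring_nf at h2 ⊢
    linarith only [h2]
  -- Step 5 : smoothness bound on ⟪h, xk1 - xk⟫
  have hvec2 : xfk1 - xgk = τ₂ • (xk1 - xk) := by rw [hxf]; abel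
  have hQ1 : ⟪G xgk - G xs - (μ/2) • (xgk - xs), xfk1 - xgk⟫_ℝ
      = τ₂ * ⟪G xgk - G xs - (μ/2) • (xgk - xs), xk1 - xk⟫_ℝ := by
    rw [hvec2, real_inner_smul_right]
  have hnrm : ‖xfk1 - xgk‖^2 = τ₂^2 * ‖xk1 - xk‖^2 := by
    rw [hvec2, norm_smul, mul_pow, Real.norm_eq_abs, sq_abs]
  have hLBf := lb_lem F (G xs) (G xgk) L (μ/2) (by linarith only [hμ]) xs xgk xfk1 (hsmooth xfk1 xgk)
  rw [hQ1, hnrm] at hLBf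
  have K4 : (2/τ₂) * ((F xfk1 - F xs - ⟪G xs, xfk1 - xs⟫_ℝ) - μ/2/2 * ‖xfk1 - xs‖^2)
      - (2/τ₂) * ((F xgk - F xs - ⟪G xs, xgk - xs⟫_ℝ) - μ/2/2 * ‖xgk - xs‖^2)
      - (1/η) * ‖xk1 - xk‖^2
      ≤ 2 * ⟪G xgk - G xs - (μ/2) • (xgk - xs), xk1 - xk⟫_ℝ := by
    have h2 := mul_le_mul_of_nonneg_left hLBf (le_of_lt (by positivity : (0:ℝ) < 2/τ₂))
    have e1 : (2/τ₂) * (τ₂ * ⟪G xgk - G xs - (μ/2) • (xgk - xs), xk1 - xk⟫_ℝ)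
        = 2 * ⟪G xgk - G xs - (μ/2) • (xgk - xs), xk1 - xk⟫_ℝ := by
      rw [← mul_assoc, div_mul_cancel₀ _ (ne_of_gt hτ₂0)]
    have e2 : (2/τ₂) * ((L/2) * (τ₂^2 * ‖xk1 - xk‖^2)) = (1/η) * ‖xk1 - xk‖^2 := by
      rw [hinv]; field_simp
    ring_nf at h2 e1 e2 ⊢
    linarith only [h2, e1, e2]
  -- Step 6 : scalar coefficient facts
  have hden : (0:ℝ) < sμ + 2 * sL := by linarith only [hsμ0, hsL0]
  have c1B : (1 - sμ/(sμ + 2*sL)) * ((1/η + μ/2) * ‖xk - xs‖^2)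
      = (1/η) * ‖xk - xs‖^2 := by
    rw [hinv2, ← hsμ2]; field_simp; ring
  have hDf0 : 0 ≤ (F xfk - F xs - ⟪G xs, xfk - xs⟫_ℝ) - μ/2/2 * ‖xfk - xs‖^2 := by
    have h1 := hstrong xfk xs
    have h2 : 0 ≤ (μ/4) * ‖xfk - xs‖^2 := mul_nonneg (by linarith only [hμ]) (sq_nonneg _)
    linarith only [h1, h2]
  have c2 : 2/τ₂ - 1 ≤ (1 - sμ/(sμ + 2*sL)) * (2/τ₂) := by
    have e1 : 2/τ₂ - 1 = (2*sL - sμ)/sμ := by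
      rw [hτ₂']; field_simp
    have e2 : (1 - sμ/(sμ + 2*sL)) * (2/τ₂) = (4*(sL*sL))/(sμ*(sμ + 2*sL)) := by
      rw [hτ₂']; field_simp; ring
    rw [e1, e2, div_le_div_iff₀ hsμ0 (by positivity)]
    nlinarith only [mul_pos hsμ0 (mul_pos hsμ0 hsμ0), hsμ0, hsL0, hsμL]
  have c2Df := mul_le_mul_of_nonneg_right c2 hDf0
  -- Step 7 : put everything together
  have hEq0 : 0 ≤ (μ/2) * ‖xgk - xk1‖^2 := mul_nonneg (by linarith only [hμ]) (sq_nonneg _)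
  unfold PsiX DF
  set A := ‖xk1 - xs‖^2 with hA
  set B := ‖xk - xs‖^2 with hB
  set C := ‖xgk - xs‖^2 with hC
  set Dn := ‖xk1 - xk‖^2 with hDn
  set Eq2 := ‖xgk - xk1‖^2 with hEq2
  set nf := ‖xfk - xs‖^2 with hnf
  set nf1 := ‖xfk1 - xs‖^2 with hnf1
  set IP := ⟪yk1 - ys, xk1 - xs⟫_ℝ with hIP
  set Ig := ⟪G xgk - (μ/2) • xgk - yk1, xk1 - xs⟫_ℝ with hIg
  set Ih := ⟪G xgk - G xs - (μ/2) • (xgk - xs), xk1 - xs⟫_ℝ with hIh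
  set P1 := ⟪G xgk - G xs - (μ/2) • (xgk - xs), xk1 - xk⟫_ℝ with hP1d
  set P2 := ⟪G xgk - G xs - (μ/2) • (xgk - xs), xgk - xk⟫_ℝ with hP2d
  set P3 := ⟪G xgk - G xs - (μ/2) • (xgk - xs), xgk - xs⟫_ℝ with hP3d
  set qf1 := F xfk1 - F xs - ⟪G xs, xfk1 - xs⟫_ℝ with hqf1
  set qf := F xfk - F xs - ⟪G xs, xfk - xs⟫_ℝ with hqf
  set qg := F xgk - F xs - ⟪G xs, xgk - xs⟫_ℝ with hqg
  have M : (1/η + μ/2) * A + (2/τ₂) * (qf1 - μ/2/2 * nf1)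
      ≤ 1/η * B + (2/τ₂ - 1) * (qf - μ/2/2 * nf) - (qg - μ/2/2 * C) + 2 * IP := by
    ring_nf at H1 H2 H3 K2 K3 K4 hEq0 ⊢
    linarith only [H1, H2, H3, K2, K3, K4, hEq0]
  ring_nf at M c1B c2Df ⊢
  linarith only [M, c1B, c2Df]
end
end

section
/- Descent lemma for the y-iterates of ADOM+: suppose β = 1/(2L), θ > 0, 0 < σ₂ ≤ 2, σ₁ = (1/σ₂ + 1/2)^{-1}, and vectors y^k, y_f^k, y_g^k, y^{k+1}, y_f^{k+1}, x_g^k, x^{k+1}, z_g^k ∈ E satisfy y_g^k = σ₁ y^k + (1 − σ₁) y_f^k, y^{k+1} = y^k + θβ(∇F(x_g^k) − ν x_g^k − y^{k+1}) − θ(ν^{-1}(y_g^k + z_g^k) + x^{k+1}), and y_f^{k+1} = y_g^k + σ₂(y^{k+1} − y^k). Then (1/θ + β/2)‖y^{k+1} − y*‖² + (β/(2σ₂))‖y_f^{k+1} − y*‖² ≤ (1/θ)‖y^k − y*‖² + (β(1 − σ₂/2)/(2σ₂))‖y_f^k − y*‖² + D_F(x_g^k, x*) − (ν/2)‖x_g^k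 − x*‖² − 2⟨x^{k+1} − x*, y^{k+1} − y*⟩ − 2ν^{-1}⟨y_g^k + z_g^k − (y* + z*), y^{k+1} − y*⟩ − (β/4)‖y_g^k − y*‖² + (βσ₂²/4 − 1/θ)‖y^{k+1} − y^k‖². -/
open scoped InnerProductSpace BigOperators

noncomputable section

section AdomPlusYDescentHelpers

theorem adom_exp2 {n d : ℕ} (a b : ℝ) (u v : E n d) :
    ‖a•u + b•v‖^2 = a^2*‖u‖^2 + 2*(a*b)*⟪u,v⟫_ℝ + b^2*‖v‖^2 := by
  rw [← real_inner_self_eq_norm_sq, ← real_inner_self_eq_norm_sq, ← real_inner_self_eq_norm_sq]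
  simp only [inner_add_left, inner_add_right, real_inner_smul_left, real_inner_smul_right,
    real_inner_comm u v]
  ring

theorem adom_exp3 {n d : ℕ} (a b c : ℝ) (u v w : E n d) :
    ‖a•u + b•v + c•w‖^2 = a^2*‖u‖^2 + b^2*‖v‖^2 + c^2*‖w‖^2
      + 2*(a*b)*⟪u,v⟫_ℝ + 2*(a*c)*⟪u,w⟫_ℝ + 2*(b*c)*⟪v,w⟫_ℝ := by
  rw [← real_inner_self_eq_norm_sq, ← real_inner_self_eq_norm_sq, ← real_inner_self_eq_norm_sq,
    ← real_inner_self_eq_norm_sq]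
  simp only [inner_add_left, inner_add_right, real_inner_smul_left, real_inner_smul_right,
    real_inner_comm u v, real_inner_comm u w, real_inner_comm v w]
  ring

/-- Cocoercivity of `∇F − ν·id` for an `L`-smooth, `μ`-strongly convex `F` with `ν ≤ μ < L`. -/
theorem adom_coco {n d : ℕ} (μ L ν : ℝ) (hLν : 0 < L - ν) (hνμ : ν ≤ μ)
    (F : E n d → ℝ) (G : E n d → E n d)
    (hsmooth : ∀ x y : E n d, F x ≤ F y + ⟪G y, x - y⟫_ℝ + (L / 2) * ‖x - y‖ ^ 2)
    (hstrong : ∀ x y : E n d, F y + ⟪G y, x - y⟫_ℝ + (μ / 2) * ‖x - y‖ ^ 2 ≤ F x)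
    (x y : E n d) :
    ‖G x - G y - ν•(x-y)‖^2 ≤ 2*(L-ν)*(F x - F y - ⟪G y, x - y⟫_ℝ - (ν/2)*‖x-y‖^2) := by
  set g : E n d := G x - G y - ν•(x-y) with hg
  set c : ℝ := (L-ν)⁻¹ with hc
  have hcpos : 0 < c := inv_pos.mpr hLν
  have hc1 : c * (L-ν) = 1 := inv_mul_cancel₀ (ne_of_gt hLν)
  set z : E n d := x - c • g with hz
  have h1 := hsmooth z x
  have h2 := hstrong z y
  have e1 : z - x = -(c • g) := by rw [hz]; abel
  have e2 : z - y = (1:ℝ) • (x - y) + (-c) • g := by rw [hz]; module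
  have n1 : ‖z - x‖^2 = c^2 * ‖g‖^2 := by
    rw [e1, norm_neg, norm_smul, Real.norm_eq_abs, mul_pow, sq_abs]
  have i1 : ⟪G x, z - x⟫_ℝ = -(c * ⟪G x, g⟫_ℝ) := by
    rw [e1, inner_neg_right, real_inner_smul_right]
  have i2 : ⟪G y, z - y⟫_ℝ = ⟪G y, x - y⟫_ℝ - c * ⟪G y, g⟫_ℝ := by
    rw [e2, inner_add_right, real_inner_smul_right, real_inner_smul_right]; ring
  have n2 : ‖z - y‖^2 = ‖x - y‖^2 - 2*c*⟪x - y, g⟫_ℝ + c^2*‖g‖^2 := by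
    rw [e2, adom_exp2]; ring
  have hgg : ‖g‖^2 = ⟪G x, g⟫_ℝ - ⟪G y, g⟫_ℝ - ν * ⟪x - y, g⟫_ℝ := by
    rw [← real_inner_self_eq_norm_sq]
    nth_rewrite 1 [hg]
    rw [inner_sub_left, inner_sub_left, real_inner_smul_left]
  have hν2 : (ν/2) * ‖z - y‖^2 ≤ (μ/2) * ‖z - y‖^2 := by
    apply mul_le_mul_of_nonneg_right _ (sq_nonneg _); linarith
  have hc2 : (L - ν) * c^2 = c := by
    calc (L - ν) * c^2 = (c * (L-ν)) * c := by ring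
    _ = c := by rw [hc1]; ring
  have key : F y + ⟪G y, x - y⟫_ℝ - c * ⟪G y, g⟫_ℝ
      + (ν/2) * (‖x - y‖^2 - 2*c*⟪x - y, g⟫_ℝ + c^2*‖g‖^2)
      ≤ F x - c * ⟪G x, g⟫_ℝ + (L/2) * (c^2 * ‖g‖^2) := by
    calc F y + ⟪G y, x - y⟫_ℝ - c * ⟪G y, g⟫_ℝ
        + (ν/2) * (‖x - y‖^2 - 2*c*⟪x - y, g⟫_ℝ + c^2*‖g‖^2)
        = F y + ⟪G y, z - y⟫_ℝ + (ν/2) * ‖z-y‖^2 := by rw [i2, n2]; ring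
      _ ≤ F y + ⟪G y, z - y⟫_ℝ + (μ/2) * ‖z-y‖^2 := by linarith
      _ ≤ F z := h2
      _ ≤ F x + ⟪G x, z - x⟫_ℝ + (L/2)*‖z-x‖^2 := h1
      _ = F x - c * ⟪G x, g⟫_ℝ + (L/2)*(c^2*‖g‖^2) := by rw [i1, n1]; ring
  have hlin : c * ⟪G x, g⟫_ℝ - c * ⟪G y, g⟫_ℝ - c * (ν * ⟪x-y, g⟫_ℝ) = c * ‖g‖^2 := by
    rw [hgg]; ring
  have hprod : (L/2)*(c^2*‖g‖^2) - (ν/2)*(c^2*‖g‖^2) = (c/2)*‖g‖^2 := by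
    calc (L/2)*(c^2*‖g‖^2) - (ν/2)*(c^2*‖g‖^2) = ((L-ν)*c^2)*‖g‖^2/2 := by ring
    _ = (c/2)*‖g‖^2 := by rw [hc2]; ring
  have hstep : c*‖g‖^2 ≤ 2*(F x - F y - ⟪G y, x - y⟫_ℝ - (ν/2)*‖x-y‖^2) := by
    linarith [key, hlin, hprod]
  have hmul := mul_le_mul_of_nonneg_left hstep (le_of_lt hLν)
  have hLg : (L-ν)*(c*‖g‖^2) = ‖g‖^2 := by
    calc (L-ν)*(c*‖g‖^2) = (c*(L-ν))*‖g‖^2 := by ring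
    _ = ‖g‖^2 := by rw [hc1]; ring
  rw [hLg] at hmul; linarith [hmul]

/-- The purely scalar quadratic inequality underlying the `y_f` descent step. -/
theorem adom_f5 (β s t a1 a2 aD i12 i1D i2D : ℝ) (hβ : 0 ≤ β) (hs0 : 0 < s) (hs2 : s ≤ 2)
    (ht : t = 2*s/(2+s))
    (hS1 : 0 ≤ a1 + a2 + aD - 2*i12 + 2*i1D - 2*i2D) (hAD : 0 ≤ aD) :
    (β/(2*s))*((t^2*a1 + 2*(t*(1-t))*i12 + (1-t)^2*a2) + 2*s*(t*i1D + (1-t)*i2D) + s^2*aD)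
      + (β/4)*(t^2*a1 + 2*(t*(1-t))*i12 + (1-t)^2*a2)
    ≤ (β/2)*(a1 + 2*i1D + aD) + (β*(1-s/2)/(2*s))*a2 + (β*s^2/4)*aD := by
  have hsne : s ≠ 0 := ne_of_gt hs0
  have h2s : (0:ℝ) < 2 + s := by linarith
  have h2sne : (2:ℝ) + s ≠ 0 := ne_of_gt h2s
  have key : (β/2)*(a1 + 2*i1D + aD) + (β*(1-s/2)/(2*s))*a2 + (β*s^2/4)*aD
      - ((β/(2*s))*((t^2*a1 + 2*(t*(1-t))*i12 + (1-t)^2*a2) + 2*s*(t*i1D + (1-t)*i2D) + s^2*aD)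
        + (β/4)*(t^2*a1 + 2*(t*(1-t))*i12 + (1-t)^2*a2))
      = (β*(2-s)/(2*(2+s)))*(a1 + a2 + aD - 2*i12 + 2*i1D - 2*i2D)
        + (β*s^3/(4*(2+s)))*aD := by
    rw [ht]; field_simp; ring
  have c1 : 0 ≤ β*(2-s)/(2*(2+s)) := by
    apply div_nonneg (mul_nonneg hβ (by linarith)) (by linarith)
  have c2 : 0 ≤ β*s^3/(4*(2+s)) := by
    apply div_nonneg (mul_nonneg hβ (by positivity)) (by linarith)
  nlinarith [mul_nonneg c1 hS1, mul_nonneg c2 hAD, key]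

end AdomPlusYDescentHelpers

set_option maxHeartbeats 2000000 in
/-- **Descent lemma for the y-iterates of ADOM+.**
With `β = 1/(2L)`, `θ > 0`, `0 < σ₂ ≤ 2`, `σ₁ = (1/σ₂ + 1/2)⁻¹`, under the `y`-update
relations of ADOM+:
`(1/θ + β/2)‖y^{k+1} − y*‖² + (β/(2σ₂))‖y_f^{k+1} − y*‖²
  ≤ (1/θ)‖y^k − y*‖² + (β(1 − σ₂/2)/(2σ₂))‖y_f^k − y*‖²
    + D_F(x_g^k, x*) − (ν/2)‖x_g^k − x*‖² − 2⟨x^{k+1} − x*, y^{k+1} − y*⟩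
    − 2ν⁻¹⟨y_g^k + z_g^k − (y* + z*), y^{k+1} − y*⟩ − (β/4)‖y_g^k − y*‖²
    + (βσ₂²/4 − 1/θ)‖y^{k+1} − y^k‖²`. -/
theorem adom_plus_y_descent
    {n d : ℕ} (hn : 1 ≤ n) (hd : 1 ≤ d)
    (μ L : ℝ) (hμ : 0 < μ) (hμL : μ ≤ L)
    (ν β θ σ₂ σ₁ : ℝ)
    (hν : ν = μ / 2) (hβ : β = 1 / (2 * L)) (hθ : 0 < θ)
    (hσ₂0 : 0 < σ₂) (hσ₂2 : σ₂ ≤ 2) (hσ₁ : σ₁ = (1 / σ₂ + 1 / 2)⁻¹)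
    (F : E n d → ℝ) (G : E n d → E n d)
    (hgrad : ∀ x, HasGradientAt F (G x) x)
    (hsmooth : ∀ x y : E n d,
      F x ≤ F y + ⟪G y, x - y⟫_ℝ + (L / 2) * ‖x - y‖ ^ 2)
    (hstrong : ∀ x y : E n d,
      F y + ⟪G y, x - y⟫_ℝ + (μ / 2) * ‖x - y‖ ^ 2 ≤ F x)
    (xs ys zs : E n d)
    (hopt1 : G xs - ν • xs - ys = 0)
    (hopt2 : ν⁻¹ • (ys + zs) + xs = 0)
    (yk yfk ygk yk1 yfk1 xgk xk1 zgk : E n d)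
    (hyg : ygk = σ₁ • yk + (1 - σ₁) • yfk)
    (hyup : yk1 = yk + (θ * β) • (G xgk - ν • xgk - yk1)
      - θ • (ν⁻¹ • (ygk + zgk) + xk1))
    (hyf : yfk1 = ygk + σ₂ • (yk1 - yk)) :
    (1 / θ + β / 2) * ‖yk1 - ys‖ ^ 2 + (β / (2 * σ₂)) * ‖yfk1 - ys‖ ^ 2 ≤
      (1 / θ) * ‖yk - ys‖ ^ 2 + (β * (1 - σ₂ / 2) / (2 * σ₂)) * ‖yfk - ys‖ ^ 2
        + DF F G xgk xs - (ν / 2) * ‖xgk - xs‖ ^ 2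
        - 2 * ⟪xk1 - xs, yk1 - ys⟫_ℝ
        - 2 * ν⁻¹ * ⟪ygk + zgk - (ys + zs), yk1 - ys⟫_ℝ
        - (β / 4) * ‖ygk - ys‖ ^ 2
        + (β * σ₂ ^ 2 / 4 - 1 / θ) * ‖yk1 - yk‖ ^ 2 := by
  -- basic positivity facts
  have hL0 : 0 < L := lt_of_lt_of_le hμ hμL
  have hν0 : 0 < ν := by rw [hν]; linarith
  have hνμ : ν ≤ μ := by rw [hν]; linarith
  have hLν : 0 < L - ν := by rw [hν]; linarith
  have hβ0 : 0 < β := by rw [hβ]; positivity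
  have hθne : θ ≠ 0 := ne_of_gt hθ
  -- shorthand for the difference of shifted gradients
  set g : E n d := G xgk - G xs - ν • (xgk - xs) with hgdef
  -- the update relation recentered at the saddle point
  have hupd : yk1 - yk = (θ*β) • (g - (yk1 - ys))
      - θ • (ν⁻¹ • (ygk + zgk - (ys + zs)) + (xk1 - xs)) := by
    have h0 : yk1 - (yk + (θ * β) • (G xgk - ν • xgk - yk1)
        - θ • (ν⁻¹ • (ygk + zgk) + xk1)) = 0 := sub_eq_zero.mpr hyup
    have h1 : (yk1 - yk) - ((θ*β) • (g - (yk1 - ys))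
        - θ • (ν⁻¹ • (ygk + zgk - (ys + zs)) + (xk1 - xs)))
        = (yk1 - (yk + (θ * β) • (G xgk - ν • xgk - yk1)
            - θ • (ν⁻¹ • (ygk + zgk) + xk1)))
          + (θ*β) • (G xs - ν • xs - ys) - θ • (ν⁻¹ • (ys + zs) + xs) := by
      rw [hgdef]; module
    rw [h0, hopt1, hopt2] at h1
    simp only [smul_zero, add_zero, sub_zero, zero_add] at h1
    exact sub_eq_zero.mp h1
  -- the inner product form of the update relation
  have hvv : ⟪yk1 - ys, yk1 - ys⟫_ℝ = ‖yk1 - ys‖^2 := real_inner_self_eq_norm_sq _ 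
  have hinner : ⟪yk1 - yk, yk1 - ys⟫_ℝ
      = θ*β*(⟪g, yk1 - ys⟫_ℝ - ⟪yk1 - ys, yk1 - ys⟫_ℝ)
        - θ*(ν⁻¹*⟪ygk + zgk - (ys + zs), yk1 - ys⟫_ℝ + ⟪xk1 - xs, yk1 - ys⟫_ℝ) := by
    rw [hupd]
    simp only [inner_sub_left, inner_add_left, real_inner_smul_left]
  rw [hvv] at hinner
  -- expansions of the relevant squared norms
  have hv : yk1 - ys = (1:ℝ) • (yk - ys) + (1:ℝ) • (yk1 - yk) := by module
  have hav : ‖yk1 - ys‖^2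
      = ‖yk - ys‖^2 + 2*⟪yk - ys, yk1 - yk⟫_ℝ + ‖yk1 - yk‖^2 := by
    rw [hv, adom_exp2]; ring
  have hw : ygk - ys = σ₁ • (yk - ys) + (1-σ₁) • (yfk - ys) := by rw [hyg]; module
  have haw : ‖ygk - ys‖^2 = σ₁^2*‖yk - ys‖^2
      + 2*(σ₁*(1-σ₁))*⟪yk - ys, yfk - ys⟫_ℝ + (1-σ₁)^2*‖yfk - ys‖^2 := by
    rw [hw, adom_exp2]
  have hwD : ⟪ygk - ys, yk1 - yk⟫_ℝ
      = σ₁*⟪yk - ys, yk1 - yk⟫_ℝ + (1-σ₁)*⟪yfk - ys, yk1 - yk⟫_ℝ := by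
    rw [hw, inner_add_left, real_inner_smul_left, real_inner_smul_left]
  have hf : yfk1 - ys = (1:ℝ) • (ygk - ys) + σ₂ • (yk1 - yk) := by rw [hyf]; module
  have haf : ‖yfk1 - ys‖^2 = ‖ygk - ys‖^2
      + 2*σ₂*⟪ygk - ys, yk1 - yk⟫_ℝ + σ₂^2*‖yk1 - yk‖^2 := by
    rw [hf, adom_exp2]; ring
  have hip : ⟪yk1 - yk, yk1 - ys⟫_ℝ = ⟪yk - ys, yk1 - yk⟫_ℝ + ‖yk1 - yk‖^2 := by
    rw [hv, inner_add_right, real_inner_smul_right, real_inner_smul_right,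
      real_inner_self_eq_norm_sq, real_inner_comm (yk1 - yk) (yk - ys)]
    ring
  have hS1 : 0 ≤ ‖yk - ys‖^2 + ‖yfk - ys‖^2 + ‖yk1 - yk‖^2
      - 2*⟪yk - ys, yfk - ys⟫_ℝ + 2*⟪yk - ys, yk1 - yk⟫_ℝ
      - 2*⟪yfk - ys, yk1 - yk⟫_ℝ := by
    have h0 := sq_nonneg ‖(1:ℝ) • (yk - ys) + (-1:ℝ) • (yfk - ys) + (1:ℝ) • (yk1 - yk)‖
    rw [adom_exp3] at h0
    linarith [h0]
  -- σ₁ in closed form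
  have hσ₂ne : σ₂ ≠ 0 := ne_of_gt hσ₂0
  have h2σne : (2:ℝ) + σ₂ ≠ 0 := ne_of_gt (by linarith)
  have hσ₁v : σ₁ = 2*σ₂/(2+σ₂) := by
    have hmul : (1/σ₂ + 1/2) * (2*σ₂/(2+σ₂)) = 1 := by field_simp
    rw [hσ₁]
    exact inv_eq_of_mul_eq_one_right hmul
  -- the cocoercivity bound combined with Cauchy–Schwarz and Young's inequality
  have hco := adom_coco μ L ν hLν hνμ F G hsmooth hstrong xgk xs
  have hDF : DF F G xgk xs = F xgk - F xs - ⟪G xs, xgk - xs⟫_ℝ := rfl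
  have hCS : ⟪g, yk1 - ys⟫_ℝ ≤ ‖g‖ * ‖yk1 - ys‖ := real_inner_le_norm g (yk1 - ys)
  have hβL : 2*β*(L-ν) ≤ 1 := by
    rw [hβ, show 2*(1/(2*L))*(L-ν) = (L-ν)/L by field_simp]
    exact div_le_one_of_le₀ (by linarith) (le_of_lt hL0)
  have c1 : (0:ℝ) ≤ 4*β*(L-ν) :=
    mul_nonneg (mul_nonneg (by norm_num) hβ0.le) hLν.le
  have h1 : 4*β*(L-ν)*⟪g, yk1 - ys⟫_ℝ ≤ 4*β*(L-ν)*(‖g‖*‖yk1 - ys‖) :=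
    mul_le_mul_of_nonneg_left hCS c1
  have h2 : 4*β*(L-ν)*(‖g‖*‖yk1 - ys‖)
      ≤ 2*(L-ν)*(F xgk - F xs - ⟪G xs, xgk - xs⟫_ℝ - (ν/2)*‖xgk - xs‖^2)
        + 4*β^2*(L-ν)^2*‖yk1 - ys‖^2 := by
    linarith [sq_nonneg (‖g‖ - 2*β*(L-ν)*‖yk1 - ys‖), hco]
  have c3 : (0:ℝ) ≤ 2*β*(L-ν)*‖yk1 - ys‖^2 :=
    mul_nonneg (mul_nonneg (mul_nonneg (by norm_num) hβ0.le) hLν.le) (sq_nonneg _)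
  have h3 : 4*β^2*(L-ν)^2*‖yk1 - ys‖^2 ≤ 2*(L-ν)*(β*‖yk1 - ys‖^2) := by
    linarith [mul_le_mul_of_nonneg_right hβL c3]
  have hGV2 : (2*(L-ν))*(2*β*⟪g, yk1 - ys⟫_ℝ)
      ≤ (2*(L-ν))*((F xgk - F xs - ⟪G xs, xgk - xs⟫_ℝ - (ν/2)*‖xgk - xs‖^2)
        + β*‖yk1 - ys‖^2) := by linarith [h1, h2, h3]
  have hGV : 2*β*⟪g, yk1 - ys⟫_ℝ
      ≤ DF F G xgk xs - (ν/2)*‖xgk - xs‖^2 + β*‖yk1 - ys‖^2 := by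
    rw [hDF]
    have := (mul_le_mul_iff_right₀ (by linarith : (0:ℝ) < 2*(L-ν))).mp hGV2
    linarith [this]
  -- the update identity divided by θ
  have hdiv : (1/θ)*(⟪yk - ys, yk1 - yk⟫_ℝ + ‖yk1 - yk‖^2)
      = β*⟪g, yk1 - ys⟫_ℝ - β*‖yk1 - ys‖^2
        - ν⁻¹*⟪ygk + zgk - (ys + zs), yk1 - ys⟫_ℝ - ⟪xk1 - xs, yk1 - ys⟫_ℝ := by
    rw [← hip, hinner]; field_simp; ring
  have hAVθ : (1/θ)*‖yk1 - ys‖^2 = (1/θ)*‖yk - ys‖^2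
      + 2*(1/θ)*⟪yk - ys, yk1 - yk⟫_ℝ + (1/θ)*‖yk1 - yk‖^2 := by rw [hav]; ring
  -- the purely quadratic part of the descent inequality
  have hF5 : (β/(2*σ₂))*‖yfk1 - ys‖^2 + (β/4)*‖ygk - ys‖^2
      ≤ (β/2)*‖yk1 - ys‖^2 + (β*(1-σ₂/2)/(2*σ₂))*‖yfk - ys‖^2
        + (β*σ₂^2/4)*‖yk1 - yk‖^2 := by
    rw [haf, haw, hwD, hav]
    linarith [adom_f5 β σ₂ σ₁ (‖yk - ys‖^2) (‖yfk - ys‖^2) (‖yk1 - yk‖^2)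
      (⟪yk - ys, yfk - ys⟫_ℝ) (⟪yk - ys, yk1 - yk⟫_ℝ) (⟪yfk - ys, yk1 - yk⟫_ℝ)
      (le_of_lt hβ0) hσ₂0 hσ₂2 hσ₁v hS1 (sq_nonneg _)]
  -- final assembly
  linarith [hdiv, hGV, hF5, hAVθ]
end
end

section
/- Descent lemma for the z-iterates of ADOM+: let χ ≥ 1, γ > 0, δ > 0, let W be a gossip map with parameter χ, and let z^k ∈ L_c^⊥, z* ∈ L_c^⊥ with y* + z* ∈ L_c. Suppose z_g^k, y_g^k, m^k ∈ E, z^{k+1} = z^k + γδ(z_g^k − z^k) − W(γν^{-1}(y_g^k + z_g^k) + m^k) and m^{k+1} = γν^{-1}(y_g^k + z_g^k) + m^k − W(γν^{-1}(y_g^k + z_g^k) + m^k). Define ẑ^k = z^k − P m^k and ẑ^{k+1} = z^{k+1} − P m^{k+1}. Then (1/γ)‖ẑ^{k+1} − z*‖² + (4/(3γ))‖m^{k+1}‖_P² ≤ (1/γ − δ)‖ẑ^k − z*‖² + (1 − (4χ)^{-1} + 3γδ/2)·(4/(3γ))‖m^k‖_P² − 2ν^{-1}⟨y_g^k + z_g^k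 − (y* + z*), z^k − z*⟩ + γν^{-2}(1 + 6χ)‖y_g^k + z_g^k‖_P² + 2δ‖z_g^k − z*‖² + (2γδ² − δ)‖z_g^k − z^k‖². -/
open scoped InnerProductSpace BigOperators

noncomputable section

lemma sum_projP {n d : ℕ} (hn : 1 ≤ n) (x : E n d) : ∑ i, projP x i = 0 := by
  have hn0 : (n:ℝ) ≠ 0 := Nat.cast_ne_zero.mpr (by omega)
  simp only [projP, PiLp.toLp_apply, Finset.sum_sub_distrib, Finset.sum_const, Finset.card_univ,
    Fintype.card_fin]
  rw [← Nat.cast_smul_eq_nsmul ℝ, smul_smul, mul_inv_cancel₀ hn0, one_smul, sub_self]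

lemma projP_eq_self {n d : ℕ} {x : E n d} (hx : ∑ i, x i = 0) : projP x = x := by
  refine PiLp.ext fun i => ?_; simp [projP, hx]

lemma projP_add {n d : ℕ} (x y : E n d) : projP (x + y) = projP x + projP y := by
  refine PiLp.ext fun i => ?_
  simp only [projP, PiLp.toLp_apply, PiLp.add_apply, Finset.sum_add_distrib, smul_add]
  abel

lemma projP_sub {n d : ℕ} (x y : E n d) : projP (x - y) = projP x - projP y := by
  refine PiLp.ext fun i => ?_
  simp only [projP, PiLp.toLp_apply, PiLp.sub_apply, Finset.sum_sub_distrib, smul_sub]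
  abel

lemma projP_smul {n d : ℕ} (r : ℝ) (x : E n d) : projP (r • x) = r • projP x := by
  refine PiLp.ext fun i => ?_
  simp only [projP, PiLp.toLp_apply, PiLp.smul_apply, ← Finset.smul_sum, smul_sub, smul_comm r]

lemma const_inner_eq_zero {n d : ℕ} (hn : 1 ≤ n) (w v : E n d)
    (hw : ∀ i j : Fin n, w i = w j) (hv : ∑ i, v i = 0) : ⟪w, v⟫_ℝ = 0 := by
  have i0 : Fin n := ⟨0, hn⟩
  rw [PiLp.inner_apply]
  calc ∑ i, ⟪w i, v i⟫_ℝ = ∑ i, ⟪w i0, v i⟫_ℝ := by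
        exact Finset.sum_congr rfl fun i _ => by rw [hw i0 i]
    _ = ⟪w i0, ∑ i, v i⟫_ℝ := (inner_sum _ _ _).symm
    _ = 0 := by rw [hv, inner_zero_right]

lemma inner_projP_left {n d : ℕ} (hn : 1 ≤ n) (x v : E n d) (hv : ∑ i, v i = 0) :
    ⟪x, v⟫_ℝ = ⟪projP x, v⟫_ℝ := by
  have hconst : ∀ i j : Fin n, (x - projP x) i = (x - projP x) j := by
    intro i j
    simp [projP, PiLp.sub_apply, sub_sub_cancel]
  have h0 := const_inner_eq_zero hn (x - projP x) v hconst hv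
  rw [inner_sub_left] at h0
  linarith

lemma key_ineq {V : Type*} [NormedAddCommGroup V] [InnerProductSpace ℝ V]
    (γ δ ε χ : ℝ) (hγ : 0 < γ) (hδ : 0 < δ) (hχ : 1 ≤ χ) (q m b c : V) :
    (1/γ) * ‖q - m + (γ*δ)•b - (γ*ε)•c‖^2
      + (4/(3*γ)) * ((1-χ⁻¹) * ‖(γ*ε)•c + m‖^2) ≤
    (1/γ - δ) * ‖q - m‖^2 + (1 - (4*χ)⁻¹ + 3*γ*δ/2) * (4/(3*γ)) * ‖m‖^2
      - 2*ε*⟪c, q⟫_ℝ + γ*ε^2*(1+6*χ)*‖c‖^2 + 2*δ*‖q+b‖^2 + (2*γ*δ^2-δ)*‖b‖^2 := by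
  have hχ0 : (0:ℝ) < χ := lt_of_lt_of_le one_pos hχ
  set t : ℝ := γ*χ*ε*(7/3 - 4/(3*χ)) with ht
  have expand : ∀ x y : V, ∀ s r : ℝ,
      True := fun _ _ _ _ => trivial
  have e1 : ‖q - m + (γ*δ)•b - (γ*ε)•c‖^2 =
      ⟪q,q⟫_ℝ + ⟪m,m⟫_ℝ + (γ*δ)^2*⟪b,b⟫_ℝ + (γ*ε)^2*⟪c,c⟫_ℝ
      - 2*⟪q,m⟫_ℝ + 2*(γ*δ)*⟪q,b⟫_ℝ - 2*(γ*ε)*⟪q,c⟫_ℝ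
      - 2*(γ*δ)*⟪m,b⟫_ℝ + 2*(γ*ε)*⟪m,c⟫_ℝ - 2*(γ*δ)*(γ*ε)*⟪b,c⟫_ℝ := by
    rw [← real_inner_self_eq_norm_sq]
    simp only [inner_sub_left, inner_sub_right, inner_add_left, inner_add_right,
      real_inner_smul_left, real_inner_smul_right]
    rw [real_inner_comm m q, real_inner_comm b q, real_inner_comm c q,
      real_inner_comm b m, real_inner_comm c m, real_inner_comm c b]
    ring
  have e2 : ‖(γ*ε)•c + m‖^2 = (γ*ε)^2*⟪c,c⟫_ℝ + 2*(γ*ε)*⟪m,c⟫_ℝ + ⟪m,m⟫_ℝ := by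
    rw [← real_inner_self_eq_norm_sq]
    simp only [inner_add_left, inner_add_right, real_inner_smul_left, real_inner_smul_right]
    rw [real_inner_comm c m]
    ring
  have e3 : ‖q - m‖^2 = ⟪q,q⟫_ℝ - 2*⟪q,m⟫_ℝ + ⟪m,m⟫_ℝ := by
    rw [← real_inner_self_eq_norm_sq]
    simp only [inner_sub_left, inner_sub_right]
    rw [real_inner_comm m q]; ring
  have e4 : ‖m‖^2 = ⟪m,m⟫_ℝ := (real_inner_self_eq_norm_sq m).symm
  have e5 : ‖c‖^2 = ⟪c,c⟫_ℝ := (real_inner_self_eq_norm_sq c).symm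
  have e6 : ‖q + b‖^2 = ⟪q,q⟫_ℝ + 2*⟪q,b⟫_ℝ + ⟪b,b⟫_ℝ := by
    rw [← real_inner_self_eq_norm_sq]
    simp only [inner_add_left, inner_add_right]
    rw [real_inner_comm b q]; ring
  have e7 : ‖b‖^2 = ⟪b,b⟫_ℝ := (real_inner_self_eq_norm_sq b).symm
  have h1 : 0 ≤ ⟪q,q⟫_ℝ + ⟪m,m⟫_ℝ + ⟪b,b⟫_ℝ + 2*⟪q,m⟫_ℝ + 2*⟪q,b⟫_ℝ + 2*⟪m,b⟫_ℝ := by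
    have := sq_nonneg ‖q + m + b‖
    rw [← real_inner_self_eq_norm_sq] at this
    simp only [inner_add_left, inner_add_right] at this
    rw [real_inner_comm q m, real_inner_comm q b, real_inner_comm m b] at this
    linarith
  have h2 : 0 ≤ δ^2*⟪b,b⟫_ℝ + 2*δ*ε*⟪b,c⟫_ℝ + ε^2*⟪c,c⟫_ℝ := by
    have := sq_nonneg ‖δ•b + ε•c‖
    rw [← real_inner_self_eq_norm_sq] at this
    simp only [inner_add_left, inner_add_right, real_inner_smul_left, real_inner_smul_right] at this
    rw [real_inner_comm b c] at this
    linarith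
  have h3 : 0 ≤ ⟪m,m⟫_ℝ - 2*t*⟪m,c⟫_ℝ + t^2*⟪c,c⟫_ℝ := by
    have := sq_nonneg ‖m - t•c‖
    rw [← real_inner_self_eq_norm_sq] at this
    simp only [inner_sub_left, inner_sub_right, real_inner_smul_left, real_inner_smul_right] at this
    rw [real_inner_comm m c] at this
    linarith
  have h4 : 0 ≤ ⟪c,c⟫_ℝ := real_inner_self_nonneg
  have hcq : ⟪c, q⟫_ℝ = ⟪q,c⟫_ℝ := real_inner_comm q c
  rw [e1, e2, e3, e4, e5, e6, e7, hcq]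
  have hcoef : 0 ≤ 5*χ - 4*χ⁻¹ + 35 := by
    have h5 : χ⁻¹ ≤ 1 := by
      rw [inv_le_one_iff₀]; right; exact hχ
    nlinarith
  have hid :
      ((1/γ - δ) * (⟪q,q⟫_ℝ - 2*⟪q,m⟫_ℝ + ⟪m,m⟫_ℝ)
        + (1 - (4*χ)⁻¹ + 3*γ*δ/2) * (4/(3*γ)) * ⟪m,m⟫_ℝ
        - 2*ε*⟪q,c⟫_ℝ + γ*ε^2*(1+6*χ)*⟪c,c⟫_ℝ
        + 2*δ*(⟪q,q⟫_ℝ + 2*⟪q,b⟫_ℝ + ⟪b,b⟫_ℝ) + (2*γ*δ^2-δ)*⟪b,b⟫_ℝ)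
      - ((1/γ) * (⟪q,q⟫_ℝ + ⟪m,m⟫_ℝ + (γ*δ)^2*⟪b,b⟫_ℝ + (γ*ε)^2*⟪c,c⟫_ℝ
        - 2*⟪q,m⟫_ℝ + 2*(γ*δ)*⟪q,b⟫_ℝ - 2*(γ*ε)*⟪q,c⟫_ℝ
        - 2*(γ*δ)*⟪m,b⟫_ℝ + 2*(γ*ε)*⟪m,c⟫_ℝ - 2*(γ*δ)*(γ*ε)*⟪b,c⟫_ℝ)
        + (4/(3*γ)) * ((1-χ⁻¹) * ((γ*ε)^2*⟪c,c⟫_ℝ + 2*(γ*ε)*⟪m,c⟫_ℝ + ⟪m,m⟫_ℝ)))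
      = δ*(⟪q,q⟫_ℝ + ⟪m,m⟫_ℝ + ⟪b,b⟫_ℝ + 2*⟪q,m⟫_ℝ + 2*⟪q,b⟫_ℝ + 2*⟪m,b⟫_ℝ)
        + γ*(δ^2*⟪b,b⟫_ℝ + 2*δ*ε*⟪b,c⟫_ℝ + ε^2*⟪c,c⟫_ℝ)
        + (1/(γ*χ))*(⟪m,m⟫_ℝ - 2*t*⟪m,c⟫_ℝ + t^2*⟪c,c⟫_ℝ)
        + (γ*ε^2*(5*χ - 4*χ⁻¹ + 35)/9)*⟪c,c⟫_ℝ := by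
    rw [ht]; field_simp; ring
  have hs1 := mul_nonneg hδ.le h1
  have hs2 := mul_nonneg hγ.le h2
  have hs3 := mul_nonneg (by positivity : (0:ℝ) ≤ 1/(γ*χ)) h3
  have hs4 := mul_nonneg (by positivity : (0:ℝ) ≤ γ*ε^2*(5*χ - 4*χ⁻¹ + 35)/9) h4
  linarith

/-- **Descent lemma for the z-iterates of ADOM+.**
Let `χ ≥ 1`, `γ > 0`, `δ > 0`, `W` a gossip map with parameter `χ`, `z^k, z* ∈ L_c^⊥` with
`y* + z* ∈ L_c`. Under the `z`- and `m`-update relations of ADOM+, with `ẑ = z − Pm`: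
`(1/γ)‖ẑ^{k+1} − z*‖² + (4/(3γ))‖m^{k+1}‖_P²
  ≤ (1/γ − δ)‖ẑ^k − z*‖² + (1 − (4χ)⁻¹ + 3γδ/2)(4/(3γ))‖m^k‖_P²
    − 2ν⁻¹⟨y_g^k + z_g^k − (y* + z*), z^k − z*⟩ + γν⁻²(1 + 6χ)‖y_g^k + z_g^k‖_P²
    + 2δ‖z_g^k − z*‖² + (2γδ² − δ)‖z_g^k − z^k‖²`. -/
theorem adom_plus_z_descent
    {n d : ℕ} (hn : 1 ≤ n) (hd : 1 ≤ d)
    (ν χ γ δ : ℝ) (hν : 0 < ν) (hχ : 1 ≤ χ) (hγ : 0 < γ) (hδ : 0 < δ)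
    (W : E n d → E n d) (hW : IsGossip χ W)
    (ys zs zk zgk ygk mk zk1 mk1 : E n d)
    (hzk : ∑ i, zk i = 0) (hzs : ∑ i, zs i = 0)
    (hyszs : ∀ i j : Fin n, (ys + zs) i = (ys + zs) j)
    (hzup : zk1 = zk + (γ * δ) • (zgk - zk) - W ((γ * ν⁻¹) • (ygk + zgk) + mk))
    (hmup : mk1 = (γ * ν⁻¹) • (ygk + zgk) + mk - W ((γ * ν⁻¹) • (ygk + zgk) + mk)) :
    (1 / γ) * ‖zk1 - projP mk1 - zs‖ ^ 2 + (4 / (3 * γ)) * ‖projP mk1‖ ^ 2 ≤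
      (1 / γ - δ) * ‖zk - projP mk - zs‖ ^ 2
        + (1 - (4 * χ)⁻¹ + 3 * γ * δ / 2) * (4 / (3 * γ)) * ‖projP mk‖ ^ 2
        - 2 * ν⁻¹ * ⟪ygk + zgk - (ys + zs), zk - zs⟫_ℝ
        + γ * (ν ^ 2)⁻¹ * (1 + 6 * χ) * ‖projP (ygk + zgk)‖ ^ 2
        + 2 * δ * ‖zgk - zs‖ ^ 2
        + (2 * γ * δ ^ 2 - δ) * ‖zgk - zk‖ ^ 2 := by
  obtain ⟨⟨Wt, hWt⟩, hWconst, hWsum, hWcontract⟩ := hW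
  have W_add : ∀ a b : E n d, W (a + b) = W a + W b := by
    intro a b
    refine PiLp.ext fun i => ?_
    simp [hWt, PiLp.add_apply, smul_add, Finset.sum_add_distrib]
  set u : E n d := (γ * ν⁻¹) • (ygk + zgk) + mk with hu
  have hconstu : ∀ i j : Fin n, (u - projP u) i = (u - projP u) j := by
    intro i j
    simp [projP, PiLp.sub_apply, sub_sub_cancel]
  have hWu : W u = W (projP u) := by
    have h0 : W (u - projP u) = 0 := hWconst _ hconstu
    have h1 : u = projP u + (u - projP u) := by abel
    calc W u = W (projP u + (u - projP u)) := by rw [← h1]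
      _ = W (projP u) + W (u - projP u) := W_add _ _
      _ = W (projP u) := by rw [h0, add_zero]
  have hPmk1 : projP mk1 = projP u - W (projP u) := by
    rw [hmup, projP_sub, projP_eq_self (hWsum u), hWu]
  have hPu : projP u = (γ * ν⁻¹) • projP (ygk + zgk) + projP mk := by
    rw [hu, projP_add, projP_smul]
  have hnorm : ‖projP mk1‖ ^ 2 ≤
      (1 - χ⁻¹) * ‖(γ * ν⁻¹) • projP (ygk + zgk) + projP mk‖ ^ 2 := by
    rw [hPmk1, norm_sub_rev, ← hPu]
    exact hWcontract _ (sum_projP hn u)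
  have hz1 : zk1 - projP mk1 - zs =
      zk - zs - projP mk + (γ * δ) • (zgk - zk) - (γ * ν⁻¹) • projP (ygk + zgk) := by
    rw [hzup, hPmk1, hWu, hPu]
    abel
  have hsumv : ∑ i, (zk - zs) i = 0 := by
    simp [PiLp.sub_apply, Finset.sum_sub_distrib, hzk, hzs]
  have hip : ⟪ygk + zgk - (ys + zs), zk - zs⟫_ℝ = ⟪projP (ygk + zgk), zk - zs⟫_ℝ := by
    rw [inner_sub_left, const_inner_eq_zero hn (ys + zs) _ hyszs hsumv, sub_zero,
      inner_projP_left hn _ _ hsumv]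
  have hkey := key_ineq γ δ ν⁻¹ χ hγ hδ hχ (zk - zs) (projP mk) (zgk - zk)
    (projP (ygk + zgk))
  rw [← hz1] at hkey
  have ha : zk - zs - projP mk = zk - projP mk - zs := by abel
  have hb : zk - zs + (zgk - zk) = zgk - zs := by abel
  rw [ha, hb, ← hip] at hkey
  have hfin : (1 / γ) * ‖zk1 - projP mk1 - zs‖ ^ 2 + (4 / (3 * γ)) * ‖projP mk1‖ ^ 2 ≤
      (1 / γ) * ‖zk1 - projP mk1 - zs‖ ^ 2
        + (4 / (3 * γ)) * ((1 - χ⁻¹) * ‖(γ * ν⁻¹) • projP (ygk + zgk) + projP mk‖ ^ 2) := by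
    have h43 : (0:ℝ) ≤ 4 / (3 * γ) := by positivity
    nlinarith [mul_le_mul_of_nonneg_left hnorm h43]
  have hν2 : γ * (ν ^ 2)⁻¹ * (1 + 6 * χ) = γ * ν⁻¹ ^ 2 * (1 + 6 * χ) := by
    rw [inv_pow]
  rw [hν2]
  exact le_trans hfin hkey
end
end

section
/- Algebraic three-point inequality for momentum iterates: if y^k, y_f^k, y^{k+1}, y* ∈ H, y_g^k = σ₁ y^k + (1 − σ₁) y_f^k, and y_f^{k+1} = y_g^k + σ₂(y^{k+1} − y^k), then −‖y^{k+1} − y*‖² ≤ ((1 − σ₁)/σ₁)‖y_f^k − y*‖² − (1/σ₂)‖y_f^{k+1} − y*‖² − (1/σ₁ − 1/σ₂)‖y_g^k − y*‖² + (σ₂ − σ₁)‖y^{k+1} − y^k‖². -/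
open scoped InnerProductSpace

/-- **Algebraic three-point inequality for momentum iterates.**
If `y_g^k = σ₁ y^k + (1 − σ₁) y_f^k` and `y_f^{k+1} = y_g^k + σ₂ (y^{k+1} − y^k)`, then
`−‖y^{k+1} − y*‖² ≤ ((1 − σ₁)/σ₁)‖y_f^k − y*‖² − (1/σ₂)‖y_f^{k+1} − y*‖²
  − (1/σ₁ − 1/σ₂)‖y_g^k − y*‖² + (σ₂ − σ₁)‖y^{k+1} − y^k‖²`. -/
theorem momentum_three_point_inequality
    {H : Type*} [NormedAddCommGroup H] [InnerProductSpace ℝ H]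
    (σ₁ σ₂ : ℝ) (hσ₁0 : 0 < σ₁) (hσ₁1 : σ₁ ≤ 1) (hσ₁₂ : σ₁ ≤ σ₂)
    (yk yfk yk1 yfk1 ygk ys : H)
    (hyg : ygk = σ₁ • yk + (1 - σ₁) • yfk)
    (hyf : yfk1 = ygk + σ₂ • (yk1 - yk)) :
    -‖yk1 - ys‖ ^ 2 ≤
      ((1 - σ₁) / σ₁) * ‖yfk - ys‖ ^ 2 - (1 / σ₂) * ‖yfk1 - ys‖ ^ 2
        - (1 / σ₁ - 1 / σ₂) * ‖ygk - ys‖ ^ 2 + (σ₂ - σ₁) * ‖yk1 - yk‖ ^ 2 := by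
  have hσ₂0 : 0 < σ₂ := lt_of_lt_of_le hσ₁0 hσ₁₂
  subst hyg hyf
  have key :
      ((1 - σ₁) / σ₁) * ‖yfk - ys‖ ^ 2
        - (1 / σ₂) * ‖(σ₁ • yk + (1 - σ₁) • yfk + σ₂ • (yk1 - yk)) - ys‖ ^ 2
        - (1 / σ₁ - 1 / σ₂) * ‖(σ₁ • yk + (1 - σ₁) • yfk) - ys‖ ^ 2
        + (σ₂ - σ₁) * ‖yk1 - yk‖ ^ 2 + ‖yk1 - ys‖ ^ 2
      = (1 - σ₁) * ‖yk1 - yfk‖ ^ 2 := by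
    simp only [← real_inner_self_eq_norm_sq, inner_sub_left, inner_sub_right,
      inner_add_left, inner_add_right, real_inner_smul_left, real_inner_smul_right,
      real_inner_comm yk yfk, real_inner_comm yk yk1, real_inner_comm yk ys,
      real_inner_comm yfk yk1, real_inner_comm yfk ys, real_inner_comm yk1 ys]
    field_simp
    ring
  nlinarith [mul_nonneg (sub_nonneg.2 hσ₁1) (sq_nonneg ‖yk1 - yfk‖)]
end

section
/- Algebraic cross-term lower bound: let 0 < σ₂ ≤ 2 and σ₁ = (1/σ₂ + 1/2)^{-1}. If y^k, y_f^k, y_g^k, z^k, z_f^k, z_g^k, y*, z* ∈ H satisfy y_g^k = σ₁ y^k + (1 − σ₁) y_f^k and z_g^k = σ₁ z^k + (1 − σ₁) z_f^k, then 2⟨y_g^k + z_g^k − (y* + z*), y^k + z^k − (y* + z*)⟩ ≥ 2‖y_g^k + z_g^k − (y* + z*)‖² + ((1 − σ₂/2)/σ₂)(‖y_g^k + z_g^k − (y* + z*)‖² − ‖y_f^k + z_f^k − (y* + z*)‖²). -/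
open scoped InnerProductSpace

/-- **Algebraic cross-term lower bound.**
Let `0 < σ₂ ≤ 2` and `σ₁ = (1/σ₂ + 1/2)⁻¹`. If `y_g^k = σ₁ y^k + (1 − σ₁) y_f^k` and
`z_g^k = σ₁ z^k + (1 − σ₁) z_f^k`, then
`2⟨y_g^k + z_g^k − (y* + z*), y^k + z^k − (y* + z*)⟩ ≥ 2‖y_g^k + z_g^k − (y* + z*)‖²
  + ((1 − σ₂/2)/σ₂)(‖y_g^k + z_g^k − (y* + z*)‖² − ‖y_f^k + z_f^k − (y* + z*)‖²)`. -/
theorem cross_term_lower_bound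
    {H : Type*} [NormedAddCommGroup H] [InnerProductSpace ℝ H]
    (σ₁ σ₂ : ℝ) (hσ₂0 : 0 < σ₂) (hσ₂2 : σ₂ ≤ 2) (hσ₁ : σ₁ = (1 / σ₂ + 1 / 2)⁻¹)
    (yk yfk ygk zk zfk zgk ys zs : H)
    (hyg : ygk = σ₁ • yk + (1 - σ₁) • yfk)
    (hzg : zgk = σ₁ • zk + (1 - σ₁) • zfk) :
    2 * ‖ygk + zgk - (ys + zs)‖ ^ 2
      + ((1 - σ₂ / 2) / σ₂) * (‖ygk + zgk - (ys + zs)‖ ^ 2 - ‖yfk + zfk - (ys + zs)‖ ^ 2)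
      ≤ 2 * ⟪ygk + zgk - (ys + zs), yk + zk - (ys + zs)⟫_ℝ := by
  set a := ygk + zgk - (ys + zs) with ha
  set b := yk + zk - (ys + zs) with hb
  set c := yfk + zfk - (ys + zs) with hc
  have hσ₁0 : 0 < σ₁ := by
    rw [hσ₁]
    positivity
  have hab : a = σ₁ • b + (1 - σ₁) • c := by
    rw [ha, hb, hc, hyg, hzg]
    module
  have hinner : ⟪a, b⟫_ℝ = σ₁⁻¹ * (‖a‖ ^ 2 - (1 - σ₁) * ⟪a, c⟫_ℝ) := by
    have hb' : b = σ₁⁻¹ • (a - (1 - σ₁) • c) := by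
      rw [hab]
      match_scalars <;> field_simp <;> ring
    rw [hb', real_inner_smul_right, inner_sub_right, real_inner_smul_right]
    rw [real_inner_self_eq_norm_sq]
  have hac : ‖a - c‖ ^ 2 = ‖a‖ ^ 2 - 2 * ⟪a, c⟫_ℝ + ‖c‖ ^ 2 := by
    rw [norm_sub_sq_real]
  have hσ₁inv : σ₁⁻¹ = 1 / σ₂ + 1 / 2 := by
    rw [hσ₁, inv_inv]
  have ht : (1 - σ₂ / 2) / σ₂ = 1 / σ₂ - 1 / 2 := by
    field_simp
  have hσ₁le : σ₁ ≤ 1 := by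
    rw [hσ₁]
    rw [inv_le_one_iff₀]
    right
    have : 1 / σ₂ ≥ 1 / 2 := by
      apply one_div_le_one_div_of_le <;> linarith
    linarith
  have htnn : 0 ≤ 1 / σ₂ - 1 / 2 := by
    have : 1 / σ₂ ≥ 1 / 2 := by
      apply one_div_le_one_div_of_le <;> linarith
    linarith
  have hsq : 0 ≤ ‖a - c‖ ^ 2 := by positivity
  have hmul : σ₁⁻¹ * (1 - σ₁) = 1 / σ₂ - 1 / 2 := by
    have : σ₁ ≠ 0 := hσ₁0.ne'
    rw [hσ₁inv, hσ₁, mul_one_sub, mul_inv_cancel₀ (by positivity)]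
    ring
  rw [hinner, ht]
  nlinarith [hsq, hac, hσ₁inv, hmul]
end

section
/- Coupled y–z cross-term bound with gossip contraction: let χ ≥ 1, σ₂ > 0, ζ = 1/2, let W be a gossip map with parameter χ, and suppose y* + z* ∈ L_c. If y^k, y^{k+1}, y_g^k, z_g^k, y_f^{k+1}, z_f^{k+1} ∈ E satisfy y_f^{k+1} = y_g^k + σ₂(y^{k+1} − y^k) and z_f^{k+1} = z_g^k − ζ W(y_g^k + z_g^k), then −2⟨y^{k+1} − y^k, y_g^k + z_g^k − (y* + z*)⟩ ≤ (1/σ₂)‖y_g^k + z_g^k − (y* + z*)‖² − (1/σ₂)‖y_f^{k+1} + z_f^{k+1} − (y* + z*)‖² + 2σ₂‖y^{k+1} − y^k‖² − (1/(2σ₂χ))‖y_g^k + z_g^k‖_P². -/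
open scoped InnerProductSpace BigOperators

noncomputable section

lemma sub_projP_const {n d : ℕ} (x : E n d) (i j : Fin n) :
    (x - projP x) i = (x - projP x) j := by
  simp [projP]

lemma inner_const_right_zero {n d : ℕ} (hn : 1 ≤ n) (x y : E n d)
    (hx : ∀ i j : Fin n, x i = x j) (hy : ∑ i, y i = 0) : ⟪x, y⟫_ℝ = 0 := by
  have i0 : Fin n := ⟨0, hn⟩
  rw [PiLp.inner_apply]
  have h : ∀ i : Fin n, ⟪x i, y i⟫_ℝ = ⟪x i0, y i⟫_ℝ := fun i => by rw [hx i i0]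
  rw [Finset.sum_congr rfl (fun i _ => h i), ← inner_sum, hy, inner_zero_right]

/-- **Coupled y–z cross-term bound with gossip contraction.**
Let `χ ≥ 1`, `σ₂ > 0`, `ζ = 1/2`, `W` a gossip map with parameter `χ`, `y* + z* ∈ L_c`, and
suppose `y_f^{k+1} = y_g^k + σ₂(y^{k+1} − y^k)` and `z_f^{k+1} = z_g^k − ζ W(y_g^k + z_g^k)`.
Then `−2⟨y^{k+1} − y^k, y_g^k + z_g^k − (y* + z*)⟩
  ≤ (1/σ₂)‖y_g^k + z_g^k − (y* + z*)‖² − (1/σ₂)‖y_f^{k+1} + z_f^{k+1} − (y* + z*)‖²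
    + 2σ₂‖y^{k+1} − y^k‖² − (1/(2σ₂χ))‖y_g^k + z_g^k‖_P²`. -/
theorem adom_plus_coupled_cross_term
    {n d : ℕ} (hn : 1 ≤ n) (hd : 1 ≤ d)
    (χ σ₂ ζ : ℝ) (hχ : 1 ≤ χ) (hσ₂ : 0 < σ₂) (hζ : ζ = 1 / 2)
    (W : E n d → E n d) (hW : IsGossip χ W)
    (ys zs : E n d) (hyszs : ∀ i j : Fin n, (ys + zs) i = (ys + zs) j)
    (yk yk1 ygk zgk yfk1 zfk1 : E n d)
    (hyf : yfk1 = ygk + σ₂ • (yk1 - yk))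
    (hzf : zfk1 = zgk - ζ • W (ygk + zgk)) :
    -2 * ⟪yk1 - yk, ygk + zgk - (ys + zs)⟫_ℝ ≤
      (1 / σ₂) * ‖ygk + zgk - (ys + zs)‖ ^ 2
        - (1 / σ₂) * ‖yfk1 + zfk1 - (ys + zs)‖ ^ 2
        + 2 * σ₂ * ‖yk1 - yk‖ ^ 2
        - (1 / (2 * σ₂ * χ)) * ‖projP (ygk + zgk)‖ ^ 2 := by
  obtain ⟨⟨Wt, hWt⟩, hker, hrange, hcontr⟩ := hW
  subst hyf hzf hζ
  set s := ygk + zgk with hs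
  set c := ys + zs with hc
  set a := yk1 - yk with ha
  set v := projP s with hv
  set u := W s with hu
  have hχ0 : (0:ℝ) < χ := lt_of_lt_of_le one_pos hχ
  have hsum_v : ∑ i, v i = 0 := sum_projP hn s
  have hWsv : u = W v := by
    have h0 : W (s - v) = 0 := hker _ (sub_projP_const s)
    apply PiLp.ext; intro i
    have h1 : W (s - v) i = W s i - W v i := by
      simp [hWt, smul_sub, Finset.sum_sub_distrib]
    have h2 : W (s - v) i = 0 := by rw [h0]; rfl
    have h3 : W s i - W v i = 0 := h1.symm.trans h2
    rw [hu]
    exact sub_eq_zero.mp h3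
  have hcu : ⟪c, u⟫_ℝ = 0 := inner_const_right_zero hn c u hyszs (hrange s)
  have hsvu : ⟪s - v, u⟫_ℝ = 0 :=
    inner_const_right_zero hn _ u (sub_projP_const s) (hrange s)
  have hscu : ⟪s - c, u⟫_ℝ = ⟪v, u⟫_ℝ := by
    rw [inner_sub_left] at hsvu ⊢
    rw [hcu]
    linarith
  have hG2 : ‖u‖ ^ 2 - 2 * ⟪v, u⟫_ℝ + ‖v‖ ^ 2 ≤ (1 - χ⁻¹) * ‖v‖ ^ 2 := by
    have h := hcontr v hsum_v
    rw [← hWsv] at h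
    have he : ‖u - v‖ ^ 2 = ‖u‖ ^ 2 - 2 * ⟪v, u⟫_ℝ + ‖v‖ ^ 2 := by
      simp only [← real_inner_self_eq_norm_sq, inner_sub_left, inner_sub_right]
      rw [real_inner_comm u v]; ring
    linarith
  have hP2 : (0:ℝ) ≤ σ₂ ^ 2 * ‖a‖ ^ 2 + σ₂ * ⟪a, u⟫_ℝ + (1/4) * ‖u‖ ^ 2 := by
    have h : (0:ℝ) ≤ ‖σ₂ • a + (2⁻¹:ℝ) • u‖ ^ 2 := by positivity
    have he : ‖σ₂ • a + (2⁻¹:ℝ) • u‖ ^ 2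
        = σ₂ ^ 2 * ‖a‖ ^ 2 + σ₂ * ⟪a, u⟫_ℝ + (1/4) * ‖u‖ ^ 2 := by
      simp only [← real_inner_self_eq_norm_sq, inner_add_left, inner_add_right,
        real_inner_smul_left, real_inner_smul_right]
      rw [real_inner_comm u a]; ring
    linarith
  have hfc : ygk + σ₂ • a + (zgk - (1/2:ℝ) • u) - c = (s - c) + (σ₂ • a - (1/2:ℝ) • u) := by
    rw [hs]; abel
  rw [hfc]
  have e1 : ⟪s - c, σ₂ • a - (1/2:ℝ) • u⟫_ℝ
      = σ₂ * ⟪a, s - c⟫_ℝ - (1/2) * ⟪v, u⟫_ℝ := by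
    rw [inner_sub_right, real_inner_smul_right, real_inner_smul_right,
      real_inner_comm (s - c) a, hscu]
  have e2 : ‖σ₂ • a - (1/2:ℝ) • u‖ ^ 2
      = σ₂ ^ 2 * ‖a‖ ^ 2 - σ₂ * ⟪a, u⟫_ℝ + (1/4) * ‖u‖ ^ 2 := by
    rw [norm_sub_sq_real, real_inner_smul_left, real_inner_smul_right,
      norm_smul, norm_smul]
    simp only [Real.norm_eq_abs, mul_pow, sq_abs]
    ring
  have hN : ‖(s - c) + (σ₂ • a - (1/2:ℝ) • u)‖ ^ 2
      = ‖s - c‖ ^ 2 + σ₂ ^ 2 * ‖a‖ ^ 2 + (1/4) * ‖u‖ ^ 2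
        + 2 * σ₂ * ⟪a, s - c⟫_ℝ - ⟪v, u⟫_ℝ - σ₂ * ⟪a, u⟫_ℝ := by
    rw [norm_add_sq_real, e1, e2]; ring
  rw [hN]
  have hkey : χ⁻¹ * ‖v‖ ^ 2 ≤ 2 * ⟪v, u⟫_ℝ - ‖u‖ ^ 2 := by
    have : (1 - χ⁻¹) * ‖v‖ ^ 2 = ‖v‖ ^ 2 - χ⁻¹ * ‖v‖ ^ 2 := by ring
    linarith [hG2, this]
  have hmain : (0:ℝ) ≤ σ₂ ^ 2 * ‖a‖ ^ 2 + σ₂ * ⟪a, u⟫_ℝ + (1/4) * ‖u‖ ^ 2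
      + (2 * ⟪v, u⟫_ℝ - ‖u‖ ^ 2 - χ⁻¹ * ‖v‖ ^ 2) / 2 := by linarith
  have hσne : σ₂ ≠ 0 := ne_of_gt hσ₂
  have hχne : χ ≠ 0 := ne_of_gt hχ0
  rw [← sub_nonneg]
  have heq : (1 / σ₂) * ‖s - c‖ ^ 2
        - (1 / σ₂) * (‖s - c‖ ^ 2 + σ₂ ^ 2 * ‖a‖ ^ 2 + (1/4) * ‖u‖ ^ 2
          + 2 * σ₂ * ⟪a, s - c⟫_ℝ - ⟪v, u⟫_ℝ - σ₂ * ⟪a, u⟫_ℝ)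
        + 2 * σ₂ * ‖a‖ ^ 2 - (1 / (2 * σ₂ * χ)) * ‖v‖ ^ 2
        - (-2 * ⟪a, s - c⟫_ℝ)
      = (1 / σ₂) * (σ₂ ^ 2 * ‖a‖ ^ 2 + σ₂ * ⟪a, u⟫_ℝ + (1/4) * ‖u‖ ^ 2
        + (2 * ⟪v, u⟫_ℝ - ‖u‖ ^ 2 - χ⁻¹ * ‖v‖ ^ 2) / 2) := by
    field_simp
    ring
  rw [heq]
  exact mul_nonneg (by positivity) hmain
end
end

section
/- Multi-consensus contraction: let T ≥ 1 and let W_0, …, W_{T−1} be gossip matrices with parameter χ ≥ 1. Define M = I − (I − W_{T−1})(I − W_{T−2})⋯(I − W_0). Then M is again a gossip matrix with improved contraction: M x = 0 whenever x_1 = ⋯ = x_n; the coordinates of M x sum to 0 for every x ∈ ℝ^n; and ‖M x − x‖² ≤ (1 − χ^{-1})^T ‖x‖² for every x ∈ ℝ^n with ∑_{i=1}^n x_i = 0. -/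
open scoped BigOperators

/-- `W` is a gossip matrix with parameter `χ ≥ 1`: it kills constant vectors, its range has
coordinates summing to zero, and it is a `(1 - χ⁻¹)`-contraction (in squared Euclidean norm)
on the space of mean-zero vectors. -/
def IsGossipMatrix {n : ℕ} (χ : ℝ) (W : Matrix (Fin n) (Fin n) ℝ) : Prop :=
  (∀ x : Fin n → ℝ, (∀ i j : Fin n, x i = x j) → W.mulVec x = 0) ∧
  (∀ x : Fin n → ℝ, ∑ i, W.mulVec x i = 0) ∧
  (∀ x : Fin n → ℝ, ∑ i, x i = 0 →
    ∑ i, (W.mulVec x i - x i) ^ 2 ≤ (1 - χ⁻¹) * ∑ i, (x i) ^ 2)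

/-- The product `(I − W_{t−1}) ⋯ (I − W_0)`. -/
noncomputable def consensusProd {n : ℕ} (W : ℕ → Matrix (Fin n) (Fin n) ℝ) :
    ℕ → Matrix (Fin n) (Fin n) ℝ
  | 0 => 1
  | t + 1 => (1 - W t) * consensusProd W t

lemma consensusProd_aux {n : ℕ} (χ : ℝ) (hχ : 1 ≤ χ) (T : ℕ)
    (W : ℕ → Matrix (Fin n) (Fin n) ℝ)
    (hW : ∀ t, t < T → IsGossipMatrix χ (W t)) :
    ∀ t, t ≤ T →
      (∀ x : Fin n → ℝ, (∀ i j : Fin n, x i = x j) → (consensusProd W t).mulVec x = x) ∧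
      (∀ x : Fin n → ℝ, ∑ i, (consensusProd W t).mulVec x i = ∑ i, x i) ∧
      (∀ x : Fin n → ℝ, ∑ i, x i = 0 →
        ∑ i, ((consensusProd W t).mulVec x i) ^ 2 ≤ (1 - χ⁻¹) ^ t * ∑ i, (x i) ^ 2) := by
  intro t
  induction t with
  | zero =>
    intro _
    refine ⟨fun x _ => by simp [consensusProd], fun x => by simp [consensusProd],
      fun x _ => by simp [consensusProd]⟩
  | succ t ih =>
    intro hle
    have ht : t ≤ T := Nat.le_of_succ_le hle
    obtain ⟨ih1, ih2, ih3⟩ := ih ht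
    obtain ⟨g1, g2, g3⟩ := hW t (Nat.lt_of_succ_le hle)
    have hmul : ∀ x : Fin n → ℝ, (consensusProd W (t + 1)).mulVec x =
        (consensusProd W t).mulVec x - (W t).mulVec ((consensusProd W t).mulVec x) := by
      intro x
      show ((1 - W t) * consensusProd W t).mulVec x = _
      rw [← Matrix.mulVec_mulVec, Matrix.sub_mulVec, Matrix.one_mulVec]
    refine ⟨?_, ?_, ?_⟩
    · intro x hx
      rw [hmul, ih1 x hx, g1 x hx]
      simp
    · intro x
      rw [hmul]
      simp only [Pi.sub_apply, Finset.sum_sub_distrib]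
      rw [g2, ih2, sub_zero]
    · intro x hx
      rw [hmul]
      set y := (consensusProd W t).mulVec x with hy
      have hsy : ∑ i, y i = 0 := by rw [hy, ih2, hx]
      have h1 : ∑ i, (y i - (W t).mulVec y i) ^ 2 ≤ (1 - χ⁻¹) * ∑ i, (y i) ^ 2 := by
        calc ∑ i, (y i - (W t).mulVec y i) ^ 2 = ∑ i, ((W t).mulVec y i - y i) ^ 2 := by
              apply Finset.sum_congr rfl; intro i _; ring
          _ ≤ (1 - χ⁻¹) * ∑ i, (y i) ^ 2 := g3 y hsy
      have hχ0 : (0:ℝ) ≤ 1 - χ⁻¹ := by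
        have : χ⁻¹ ≤ 1 := inv_le_one_of_one_le₀ hχ
        linarith
      calc ∑ i, (y i - (W t).mulVec y i) ^ 2 ≤ (1 - χ⁻¹) * ∑ i, (y i) ^ 2 := h1
        _ ≤ (1 - χ⁻¹) * ((1 - χ⁻¹) ^ t * ∑ i, (x i) ^ 2) :=
            mul_le_mul_of_nonneg_left (ih3 x hx) hχ0
        _ = (1 - χ⁻¹) ^ (t + 1) * ∑ i, (x i) ^ 2 := by ring

/-- **Multi-consensus contraction.**
Let `T ≥ 1` and let `W_0, …, W_{T−1}` be gossip matrices with parameter `χ ≥ 1`. Then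
`M = I − (I − W_{T−1})(I − W_{T−2})⋯(I − W_0)` is again a gossip matrix, with improved
contraction factor `(1 − χ⁻¹)^T` on mean-zero vectors. -/
theorem multi_consensus_contraction {n : ℕ} (hn : 1 ≤ n)
    (χ : ℝ) (hχ : 1 ≤ χ) (T : ℕ) (hT : 1 ≤ T)
    (W : ℕ → Matrix (Fin n) (Fin n) ℝ)
    (hW : ∀ t, t < T → IsGossipMatrix χ (W t)) :
    (∀ x : Fin n → ℝ, (∀ i j : Fin n, x i = x j) →
        (1 - consensusProd W T).mulVec x = 0) ∧
    (∀ x : Fin n → ℝ, ∑ i, (1 - consensusProd W T).mulVec x i = 0) ∧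
    (∀ x : Fin n → ℝ, ∑ i, x i = 0 →
        ∑ i, ((1 - consensusProd W T).mulVec x i - x i) ^ 2 ≤
          (1 - χ⁻¹) ^ T * ∑ i, (x i) ^ 2) := by
  obtain ⟨h1, h2, h3⟩ := consensusProd_aux χ hχ T W hW T le_rfl
  have hsub : ∀ x : Fin n → ℝ, (1 - consensusProd W T).mulVec x =
      x - (consensusProd W T).mulVec x := by
    intro x
    rw [Matrix.sub_mulVec, Matrix.one_mulVec]
  refine ⟨?_, ?_, ?_⟩
  · intro x hx
    rw [hsub, h1 x hx, sub_self]
  · intro x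
    simp only [hsub, Pi.sub_apply, Finset.sum_sub_distrib, h2, sub_self]
  · intro x hx
    have : ∀ i, ((1 - consensusProd W T).mulVec x i - x i) ^ 2 =
        ((consensusProd W T).mulVec x i) ^ 2 := by
      intro i
      rw [hsub]
      simp only [Pi.sub_apply]
      ring
    simp only [this]
    exact h3 x hx
end

section
/- Information-propagation lemma for the cyclic star construction (Lemma A.2): for every q ∈ ℕ, every time step k with 0 ≤ k ≤ k_q, and every i ∈ V: s_i(k) ≤ 2⌊q/m⌋ if i ∈ V₃ or i_c(q) ≤ i ≤ 2m, and s_i(k) ≤ 2⌊q/m⌋ + 1 otherwise. -/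
open scoped BigOperators

/-- The number of communication rounds performed before time step `k`
(`c j = true` means time step `j` is a decentralized communication round,
`c j = false` means it is a local computation round). -/
def qCount (c : ℕ → Bool) (k : ℕ) : ℕ :=
  ((Finset.range k).filter fun j => c j = true).card

/-- The center of the star graph used at communication round `q`: `i_c(q) = m + 1 + (q mod m)`. -/
def icenter (m q : ℕ) : ℕ := m + 1 + q % m

/-- **Information-propagation lemma for the cyclic star construction (Lemma A.2).**
With `n = 3m`, `V₁ = {1,…,m}`, `V₂ = {m+1,…,2m}`, `V₃ = {2m+1,…,n}`: for every `q ∈ ℕ`,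
every time step `k ≤ k_q`, and every node `i ∈ V`,
`s_i(k) ≤ 2⌊q/m⌋` if `i ∈ V₃` or `i_c(q) ≤ i ≤ 2m`, and `s_i(k) ≤ 2⌊q/m⌋ + 1` otherwise. -/
theorem information_propagation
    (m : ℕ) (hm : 1 ≤ m)
    (c : ℕ → Bool) (K : ℕ → ℕ)
    (hK : ∀ q : ℕ, c (K q) = true ∧ qCount c (K q) = q)
    (s : ℕ → ℕ → ℕ)
    (hs0 : ∀ i, 1 ≤ i → i ≤ 3 * m → s i 0 = 0)
    (hcomp : ∀ k, c k = false →
      (∀ i, 1 ≤ i → i ≤ m → s i (k + 1) ≤ s i k + (1 - s i k % 2)) ∧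
      (∀ i, m + 1 ≤ i → i ≤ 2 * m → s i (k + 1) ≤ s i k) ∧
      (∀ i, 2 * m + 1 ≤ i → i ≤ 3 * m → s i (k + 1) ≤ s i k + s i k % 2))
    (hcomm : ∀ k, c k = true →
      (∀ i, 1 ≤ i → i ≤ 3 * m → i ≠ icenter m (qCount c k) →
        s i (k + 1) ≤ max (s i k) (s (icenter m (qCount c k)) k)) ∧
      s (icenter m (qCount c k)) (k + 1) ≤ (Finset.Icc 1 (3 * m)).sup fun j => s j k) :
    ∀ q k, k ≤ K q → ∀ i, 1 ≤ i → i ≤ 3 * m →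
      s i k ≤ 2 * (q / m) +
        (if 2 * m + 1 ≤ i ∨ (icenter m q ≤ i ∧ i ≤ 2 * m) then 0 else 1) := by
  have hqmono : ∀ a b : ℕ, a ≤ b → qCount c a ≤ qCount c b := by
    intro a b hab
    exact Finset.card_le_card
      (Finset.filter_subset_filter _ (Finset.range_subset_range.2 hab))
  have hqsucc : ∀ k, c k = true → qCount c (k + 1) = qCount c k + 1 := by
    intro k hk
    unfold qCount
    rw [Finset.range_add_one, Finset.filter_insert, if_pos hk,
      Finset.card_insert_of_notMem (by simp)]
  have huniq : ∀ k, c k = true → k = K (qCount c k) := by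
    intro k hk
    rcases lt_trichotomy k (K (qCount c k)) with h | h | h
    · exfalso
      have h1 := hqmono (k + 1) (K (qCount c k)) h
      rw [hqsucc k hk] at h1
      have h2 := (hK (qCount c k)).2
      omega
    · exact h
    · exfalso
      have h1 := hqmono (K (qCount c k) + 1) k h
      rw [hqsucc _ (hK (qCount c k)).1, (hK (qCount c k)).2] at h1
      omega
  suffices H : ∀ k q, k ≤ K q → ∀ i, 1 ≤ i → i ≤ 3 * m →
      s i k ≤ 2 * (q / m) +
        (if 2 * m + 1 ≤ i ∨ (icenter m q ≤ i ∧ i ≤ 2 * m) then 0 else 1) by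
    intro q k hk
    exact H k q hk
  intro k
  induction k with
  | zero =>
    intro q _ i h1 h2
    rw [hs0 i h1 h2]
    exact Nat.zero_le _
  | succ k ih =>
    intro q hk i h1 h2
    have hkq : k ≤ K q := by omega
    cases hck : c k with
    | false =>
      obtain ⟨hA, hB, hC⟩ := hcomp k hck
      have hb := ih q hkq i h1 h2
      by_cases hi1 : i ≤ m
      · have hstep := hA i h1 hi1
        have hic : ¬(2 * m + 1 ≤ i ∨ (icenter m q ≤ i ∧ i ≤ 2 * m)) := by
          unfold icenter; omega
        rw [if_neg hic] at hb ⊢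
        generalize (q / m) = D at hb ⊢
        omega
      · by_cases hi2 : i ≤ 2 * m
        · have hstep := hB i (by omega) hi2
          omega
        · have hstep := hC i (by omega) h2
          have hic : 2 * m + 1 ≤ i ∨ (icenter m q ≤ i ∧ i ≤ 2 * m) :=
            Or.inl (by omega)
          rw [if_pos hic] at hb ⊢
          generalize (q / m) = D at hb ⊢
          omega
    | true =>
      obtain ⟨hnc, hc⟩ := hcomm k hck
      have hkKr : k = K (qCount c k) := huniq k hck
      have hrq : qCount c k < q := by
        have h1' := hqmono (k + 1) (K q) hk
        rw [hqsucc k hck] at h1'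
        have h2' := (hK q).2
        omega
      have hmod : qCount c k % m < m := Nat.mod_lt _ (by omega)
      have hcent_lb : m + 1 ≤ icenter m (qCount c k) := by unfold icenter; omega
      have hcent_ub : icenter m (qCount c k) ≤ 2 * m := by unfold icenter; omega
      have hcbd : s (icenter m (qCount c k)) k ≤ 2 * (qCount c k / m) := by
        have h' := ih (qCount c k) hkKr.le (icenter m (qCount c k))
          (by omega) (by omega)
        rw [if_pos (Or.inr ⟨le_refl _, hcent_ub⟩)] at h'
        simpa using h'
      have hrdiv : qCount c k / m ≤ q / m := Nat.div_le_div_right hrq.le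
      by_cases hic : i = icenter m (qCount c k)
      · subst hic
        refine le_trans hc (Finset.sup_le ?_)
        intro j hj
        rw [Finset.mem_Icc] at hj
        by_cases hmm : icenter m q ≤ icenter m (qCount c k)
        · have hdivlt : qCount c k / m < q / m := by
            have h1' : q % m ≤ qCount c k % m := by unfold icenter at hmm; omega
            rcases Nat.lt_or_ge (qCount c k / m) (q / m) with h | h
            · exact h
            · exfalso
              have hge : m * (q / m) ≤ m * (qCount c k / m) :=
                Nat.mul_le_mul_left m h
              have e1 := Nat.div_add_mod (qCount c k) m
              have e2 := Nat.div_add_mod q m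
              omega
          rw [if_pos (Or.inr ⟨hmm, hcent_ub⟩)]
          have hbj := ih (qCount c k) hkKr.le j hj.1 hj.2
          have hbj' : s j k ≤ 2 * (qCount c k / m) + 1 := by
            split_ifs at hbj <;> omega
          generalize (q / m) = D at hdivlt ⊢
          generalize (qCount c k / m) = E at hdivlt hbj' ⊢
          omega
        · have hic' : ¬(2 * m + 1 ≤ icenter m (qCount c k) ∨
              (icenter m q ≤ icenter m (qCount c k) ∧
                icenter m (qCount c k) ≤ 2 * m)) := by
            push_neg
            exact ⟨by omega, fun h => absurd h hmm⟩
          rw [if_neg hic']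
          have hbj := ih q hkq j hj.1 hj.2
          split_ifs at hbj <;> omega
      · have hstep := hnc i h1 h2 hic
        have hbi := ih q hkq i h1 h2
        have hc2 : s (icenter m (qCount c k)) k ≤ 2 * (q / m) +
            (if 2 * m + 1 ≤ i ∨ (icenter m q ≤ i ∧ i ≤ 2 * m) then 0 else 1) := by
          have : 2 * (qCount c k / m) ≤ 2 * (q / m) := by omega
          split_ifs <;> omega
        exact le_trans hstep (max_le hbi hc2)
end
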